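/- For any loopless digraph G on n vertices and every q ≥ 2: h(G°,q) ≥ log_q( n(q−1)^{n−1} + (q−1)^n ); consequently h(G°,q) → n as q → ∞. -/

import Mathlib

/-- Arc `(u,i)` of the interaction graph of a coding function `f`. -/
def arcCF {V A : Type*} [DecidableEq V] (f : (V → A) → V → A) (u i : V) : Prop :=
  ∃ (x : V → A) (a : A), f (Function.update x u a) i ≠ f x i

/-- Maximum number of fixed points of a coding function over an alphabet of size `q`
with interaction graph exactly `G`; `h(G,q)` is its `log_q`. -/
noncomputable def maxFixEq {V : Type*} [Fintype V] [DecidableEq V]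
    (G : V → V → Prop) (q : ℕ) : ℕ :=
  sSup {n : ℕ | ∃ f : (V → Fin q) → V → Fin q,
    (∀ u i, arcCF f u i ↔ G u i) ∧ n = Set.ncard {x | f x = x}}

open Classical in
/-- our coding function -/
noncomputable def myF {V A : Type*} (G : V → V → Prop) (z o : A)
    (x : V → A) (i : V) : A :=
  if x i ≠ z then x i else if ∀ u, G u i → x u ≠ z then z else o

set_option linter.unusedSectionVars false
section basic
variable {V A : Type*} [DecidableEq V] {G : V → V → Prop} {z o : A} {x : V → A} {i : V}

lemma myF_of_ne (h : x i ≠ z) : myF G z o x i = x i := by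
  unfold myF; rw [if_pos h]

lemma myF_of_eq_pos (h : x i = z) (h2 : ∀ u, G u i → x u ≠ z) : myF G z o x i = z := by
  unfold myF; rw [if_neg (by simp [h]), if_pos h2]

lemma myF_of_eq_neg (h : x i = z) (h2 : ¬ ∀ u, G u i → x u ≠ z) : myF G z o x i = o := by
  unfold myF; rw [if_neg (by simp [h]), if_neg h2]

variable (G z o)

lemma myF_arcs (hG : ∀ v, ¬ G v v) (hzo : z ≠ o) (u i : V) :
    arcCF (myF G z o) u i ↔ (G u i ∨ u = i) := by
  constructor
  · rintro ⟨x, a, hne⟩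
    by_contra hcon
    push_neg at hcon
    obtain ⟨h1, h2⟩ := hcon
    apply hne
    have hiu : i ≠ u := fun h => h2 h.symm
    have hxi : Function.update x u a i = x i := Function.update_of_ne hiu a x
    have hupd : ∀ w, G w i → Function.update x u a w = x w := by
      intro w hw
      exact Function.update_of_ne (fun h : w = u => h1 (by rwa [h] at hw)) a x
    by_cases hz : x i = z
    · have hz' : Function.update x u a i = z := hxi.trans hz
      by_cases hc : ∀ w, G w i → x w ≠ z
      · have hc' : ∀ w, G w i → Function.update x u a w ≠ z := by
          intro w hw; rw [hupd w hw]; exact hc w hw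
        rw [myF_of_eq_pos hz' hc', myF_of_eq_pos hz hc]
      · have hc' : ¬ ∀ w, G w i → Function.update x u a w ≠ z := by
          intro hc'; apply hc; intro w hw; rw [← hupd w hw]; exact hc' w hw
        rw [myF_of_eq_neg hz' hc', myF_of_eq_neg hz hc]
    · have hz' : Function.update x u a i ≠ z := fun h => hz (hxi.symm.trans h)
      rw [myF_of_ne hz', myF_of_ne hz, hxi]
  · rintro (hui | rfl)
    · have hne : u ≠ i := fun h : u = i => hG i (by rwa [h] at hui)
      set x : V → A := fun w => if w = i then z else o with hxdef
      have h1 : myF G z o x i = z := by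
        refine myF_of_eq_pos (by simp [hxdef]) ?_
        intro w hw
        have hwne : w ≠ i := fun h : w = i => hG i (by rwa [h] at hw)
        simp [hxdef, hwne, hzo.symm]
      have h2 : myF G z o (Function.update x u z) i = o := by
        refine myF_of_eq_neg ?_ ?_
        · rw [Function.update_of_ne (Ne.symm hne)]; simp [hxdef]
        · push_neg
          exact ⟨u, hui, by simp [Function.update_self]⟩
      exact ⟨x, z, by rw [h1, h2]; exact hzo.symm⟩
    · set x : V → A := fun _ => o with hxdef
      have h1 : myF G z o x u = o := myF_of_ne (by simp [hxdef, hzo.symm])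
      have h2 : myF G z o (Function.update x u z) u = z := by
        refine myF_of_eq_pos (Function.update_self u z x) ?_
        intro w hw
        have hwne : w ≠ u := fun h : w = u => hG u (by rwa [h] at hw)
        rw [Function.update_of_ne hwne]
        simp [hxdef, hzo.symm]
      exact ⟨x, z, by rw [h1, h2]; exact hzo⟩

lemma myF_fix (hG : ∀ v, ¬ G v v) (x : V → A)
    (hx : (∀ i, x i ≠ z) ∨ (∃ i, x i = z ∧ ∀ j, j ≠ i → x j ≠ z)) :
    myF G z o x = x := by
  funext i
  rcases hx with h | ⟨i0, hz, hnz⟩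
  · exact myF_of_ne (h i)
  · by_cases hi : i = i0
    · subst hi
      rw [myF_of_eq_pos hz (fun w hw => hnz w (fun h : w = i => hG i (by rwa [h] at hw))), hz]
    · exact myF_of_ne (hnz i hi)
end basic
section count
variable {V A : Type*} [Fintype V] [DecidableEq V] [Fintype A] [DecidableEq A]

lemma card_good (z : A) :
    (Fintype.card V) * (Fintype.card A - 1) ^ (Fintype.card V - 1)
      + (Fintype.card A - 1) ^ (Fintype.card V) ≤
    Set.ncard {x : V → A | (∀ i, x i ≠ z) ∨ (∃ i, x i = z ∧ ∀ j, j ≠ i → x j ≠ z)} := by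
  classical
  set q := Fintype.card A with hq
  set n := Fintype.card V with hn
  set T0 : Finset (V → A) := Fintype.piFinset (fun _ : V => Finset.univ.erase z) with hT0
  set Ti : V → Finset (V → A) :=
    fun i => Fintype.piFinset (fun j => if j = i then {z} else Finset.univ.erase z) with hTi
  have mem_T0 : ∀ x : V → A, x ∈ T0 ↔ ∀ i, x i ≠ z := by
    intro x; simp [hT0, Fintype.mem_piFinset]
  have mem_Ti : ∀ (i : V) (x : V → A), x ∈ Ti i ↔ (x i = z ∧ ∀ j, j ≠ i → x j ≠ z) := by
    intro i x
    simp only [hTi, Fintype.mem_piFinset]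
    constructor
    · intro h
      refine ⟨by simpa using h i, fun j hj => ?_⟩
      have := h j
      rw [if_neg hj] at this
      simpa using this
    · rintro ⟨h1, h2⟩ j
      by_cases hj : j = i
      · subst hj; simpa using h1
      · rw [if_neg hj]; simp [h2 j hj]
  have cardT0 : T0.card = (q - 1) ^ n := by
    rw [hT0, Fintype.card_piFinset]
    simp [Finset.card_erase_of_mem, hq, hn]
  have cardTi : ∀ i : V, (Ti i).card = (q - 1) ^ (n - 1) := by
    intro i
    rw [hTi, Fintype.card_piFinset]
    rw [← Finset.mul_prod_erase Finset.univ _ (Finset.mem_univ i)]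
    rw [if_pos rfl, Finset.card_singleton, one_mul]
    rw [Finset.prod_congr rfl (fun j hj => by
      rw [if_neg (Finset.mem_erase.mp hj).1, Finset.card_erase_of_mem (Finset.mem_univ z),
        Finset.card_univ])]
    rw [Finset.prod_const, Finset.card_erase_of_mem (Finset.mem_univ i), Finset.card_univ]
  set T : Finset (V → A) := T0 ∪ Finset.univ.biUnion Ti with hT
  have hdisj : Disjoint T0 (Finset.univ.biUnion Ti) := by
    rw [Finset.disjoint_left]
    intro x hx hx'
    obtain ⟨i, _, hxi⟩ := Finset.mem_biUnion.mp hx'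
    exact ((mem_T0 x).mp hx i) ((mem_Ti i x).mp hxi).1
  have cardbi : (Finset.univ.biUnion Ti).card = n * (q - 1) ^ (n - 1) := by
    rw [Finset.card_biUnion (fun i _ j _ hij => by
      rw [Function.onFun, Finset.disjoint_left]
      intro x hx hx'
      exact (((mem_Ti j x).mp hx').2 i hij) ((mem_Ti i x).mp hx).1)]
    simp [cardTi, Finset.card_univ, hn, mul_comm]
  have cardT : T.card = n * (q - 1) ^ (n - 1) + (q - 1) ^ n := by
    rw [hT, Finset.card_union_of_disjoint hdisj, cardT0, cardbi]; ring
  rw [← cardT]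
  have hsub : (↑T : Set (V → A)) ⊆
      {x : V → A | (∀ i, x i ≠ z) ∨ (∃ i, x i = z ∧ ∀ j, j ≠ i → x j ≠ z)} := by
    intro x hx
    rcases Finset.mem_union.mp hx with h | h
    · exact Or.inl ((mem_T0 x).mp h)
    · obtain ⟨i, _, hxi⟩ := Finset.mem_biUnion.mp h
      exact Or.inr ⟨i, (mem_Ti i x).mp hxi⟩
  calc T.card = (↑T : Set (V → A)).ncard := (Set.ncard_coe_finset T).symm
    _ ≤ _ := Set.ncard_le_ncard hsub (Set.toFinite _)
end count
section main
variable {V : Type*} [Fintype V] [DecidableEq V]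

lemma maxFix_bounds (G : V → V → Prop) (hG : ∀ v, ¬ G v v) {q : ℕ} (hq : 2 ≤ q) :
    (Fintype.card V * (q - 1) ^ (Fintype.card V - 1) + (q - 1) ^ Fintype.card V
      ≤ maxFixEq (fun u i => G u i ∨ u = i) q)
    ∧ maxFixEq (fun u i => G u i ∨ u = i) q ≤ q ^ Fintype.card V := by
  classical
  set z : Fin q := ⟨0, by omega⟩ with hz
  set o : Fin q := ⟨1, by omega⟩ with ho
  have hzo : z ≠ o := by simp [hz, ho, Fin.ext_iff]
  set S := {m : ℕ | ∃ f : (V → Fin q) → V → Fin q,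
    (∀ u i, arcCF f u i ↔ (G u i ∨ u = i)) ∧ m = Set.ncard {x | f x = x}} with hS
  have hmem : Set.ncard {x : V → Fin q | myF G z o x = x} ∈ S :=
    ⟨myF G z o, fun u i => myF_arcs G z o hG hzo u i, rfl⟩
  have hbound : ∀ m ∈ S, m ≤ q ^ Fintype.card V := by
    rintro m ⟨f, _, rfl⟩
    calc Set.ncard {x | f x = x} ≤ Set.ncard (Set.univ : Set (V → Fin q)) :=
          Set.ncard_le_ncard (Set.subset_univ _) Set.finite_univ
      _ = q ^ Fintype.card V := by
          rw [Set.ncard_univ, Nat.card_eq_fintype_card, Fintype.card_fun, Fintype.card_fin]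
  have hbdd : BddAbove S := ⟨q ^ Fintype.card V, hbound⟩
  have hmax : maxFixEq (fun u i => G u i ∨ u = i) q = sSup S := rfl
  constructor
  · have h1 := card_good (V := V) (A := Fin q) z
    rw [Fintype.card_fin] at h1
    have hsub : {x : V → Fin q | (∀ i, x i ≠ z) ∨ (∃ i, x i = z ∧ ∀ j, j ≠ i → x j ≠ z)}
        ⊆ {x : V → Fin q | myF G z o x = x} := fun x hx => myF_fix G z o hG x hx
    have h2 := Set.ncard_le_ncard hsub (Set.toFinite _)
    rw [hmax]
    exact le_trans (le_trans h1 h2) (le_csSup hbdd hmem)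
  · rw [hmax]
    exact csSup_le ⟨_, hmem⟩ hbound

lemma tendsto_logb_pred : Filter.Tendsto (fun q : ℕ => Real.logb q ((q : ℝ) - 1))
    Filter.atTop (nhds 1) := by
  have hA : Filter.Tendsto (fun q : ℕ => Real.log ((q : ℝ) / ((q : ℝ) - 1)))
      Filter.atTop (nhds 0) := by
    have h1 : Filter.Tendsto (fun q : ℕ => (q : ℝ) - 1) Filter.atTop Filter.atTop :=
      Filter.tendsto_atTop_add_const_right _ (-1) tendsto_natCast_atTop_atTop
    have h2 : Filter.Tendsto (fun q : ℕ => ((q : ℝ) - 1)⁻¹) Filter.atTop (nhds 0) :=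
      h1.inv_tendsto_atTop
    have h3 : Filter.Tendsto (fun q : ℕ => (q : ℝ) / ((q : ℝ) - 1)) Filter.atTop (nhds 1) := by
      have : Filter.Tendsto (fun q : ℕ => 1 + ((q : ℝ) - 1)⁻¹) Filter.atTop (nhds 1) := by
        simpa using (tendsto_const_nhds (x := (1:ℝ))).add h2
      refine this.congr' ?_
      filter_upwards [Filter.eventually_ge_atTop 2] with q hq
      have hne : (q : ℝ) - 1 ≠ 0 := by
        have : (2 : ℝ) ≤ (q : ℝ) := by exact_mod_cast hq
        linarith
      field_simp
      ring
    have hc : ContinuousAt Real.log 1 := Real.continuousAt_log one_ne_zero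
    have := hc.tendsto.comp h3
    simpa [Function.comp_def] using this
  have hB : Filter.Tendsto (fun q : ℕ => (Real.log q)⁻¹) Filter.atTop (nhds 0) :=
    (Real.tendsto_log_atTop.comp tendsto_natCast_atTop_atTop).inv_tendsto_atTop
  have hmain : Filter.Tendsto
      (fun q : ℕ => 1 - Real.log ((q : ℝ) / ((q : ℝ) - 1)) * (Real.log q)⁻¹)
      Filter.atTop (nhds 1) := by
    simpa using (tendsto_const_nhds (x := (1:ℝ))).sub (hA.mul hB)
  refine hmain.congr' ?_
  filter_upwards [Filter.eventually_ge_atTop 2] with q hq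
  have hq2 : (2 : ℝ) ≤ (q : ℝ) := by exact_mod_cast hq
  have hqne : (q : ℝ) ≠ 0 := by linarith
  have hq1ne : (q : ℝ) - 1 ≠ 0 := by linarith
  have hlog : Real.log q ≠ 0 := ne_of_gt (Real.log_pos (by linarith))
  rw [Real.log_div hqne hq1ne, Real.logb]
  field_simp
  ring
end main
/-- For any loopless digraph `G` on `n` vertices and every `q ≥ 2`:
`h(G°,q) ≥ log_q( n(q−1)^{n−1} + (q−1)^n )`, where `G°` is `G` with a loop on every
vertex; consequently `h(G°,q) → n` as `q → ∞`. -/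
theorem stmt15 {V : Type*} [Fintype V] [DecidableEq V] (G : V → V → Prop)
    (hG : ∀ v, ¬ G v v) :
    (∀ q : ℕ, 2 ≤ q →
      Real.logb q (maxFixEq (fun u i => G u i ∨ u = i) q) ≥
        Real.logb q ((Fintype.card V * (q - 1) ^ (Fintype.card V - 1)
          + (q - 1) ^ Fintype.card V : ℕ))) ∧
    Filter.Tendsto
      (fun q : ℕ => Real.logb q (maxFixEq (fun u i => G u i ∨ u = i) q))
      Filter.atTop (nhds (Fintype.card V : ℝ)) := by
  set n := Fintype.card V with hn
  have key := fun (q : ℕ) (hq : 2 ≤ q) => maxFix_bounds G hG hq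
  have hNpos : ∀ q : ℕ, 2 ≤ q → 0 < n * (q - 1) ^ (n - 1) + (q - 1) ^ n := by
    intro q hq
    have : 0 < (q - 1) ^ n := pow_pos (by omega) n
    omega
  constructor
  · intro q hq
    obtain ⟨hlo, _⟩ := key q hq
    have hb : (1 : ℝ) < (q : ℝ) := by exact_mod_cast (by omega : 1 < q)
    exact Real.logb_le_logb_of_le hb (by exact_mod_cast hNpos q hq) (by exact_mod_cast hlo)
  · have hlo_t : Filter.Tendsto (fun q : ℕ => (n : ℝ) * Real.logb q ((q : ℝ) - 1))
        Filter.atTop (nhds n) := by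
      simpa using (tendsto_const_nhds (x := (n : ℝ))).mul tendsto_logb_pred
    refine tendsto_of_tendsto_of_tendsto_of_le_of_le' hlo_t
      (tendsto_const_nhds (x := (n : ℝ))) ?_ ?_
    · filter_upwards [Filter.eventually_ge_atTop 2] with q hq
      obtain ⟨hlo, _⟩ := key q hq
      have hb : (1 : ℝ) < (q : ℝ) := by exact_mod_cast (by omega : 1 < q)
      have hpow_le : (q - 1) ^ n ≤ maxFixEq (fun u i => G u i ∨ u = i) q :=
        le_trans (Nat.le_add_left _ _) hlo
      have hppos : (0 : ℝ) < (((q - 1 : ℕ) : ℝ)) ^ n := by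
        have : (0 : ℕ) < (q - 1) ^ n := pow_pos (by omega) n
        exact_mod_cast this
      have hcast : ((q - 1 : ℕ) : ℝ) = (q : ℝ) - 1 := by
        rw [Nat.cast_sub (by omega : 1 ≤ q)]; norm_num
      calc (n : ℝ) * Real.logb q ((q : ℝ) - 1)
          = Real.logb q ((((q - 1 : ℕ) : ℝ)) ^ n) := by rw [Real.logb_pow, hcast]
        _ ≤ Real.logb q (maxFixEq (fun u i => G u i ∨ u = i) q) := by
            refine Real.logb_le_logb_of_le hb hppos ?_
            rw [show (((q - 1 : ℕ) : ℝ)) ^ n = (((q - 1) ^ n : ℕ) : ℝ) by push_cast; ring]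
            exact_mod_cast hpow_le
    · filter_upwards [Filter.eventually_ge_atTop 2] with q hq
      obtain ⟨hlo, hhi⟩ := key q hq
      have hb : (1 : ℝ) < (q : ℝ) := by exact_mod_cast (by omega : 1 < q)
      have hpos : (0 : ℝ) < (maxFixEq (fun u i => G u i ∨ u = i) q : ℝ) := by
        have : 0 < maxFixEq (fun u i => G u i ∨ u = i) q :=
          lt_of_lt_of_le (hNpos q hq) hlo
        exact_mod_cast this
      calc Real.logb q (maxFixEq (fun u i => G u i ∨ u = i) q)
          ≤ Real.logb q ((q : ℝ) ^ n) := by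
            refine Real.logb_le_logb_of_le hb hpos ?_
            rw [show ((q : ℝ)) ^ n = ((q ^ n : ℕ) : ℝ) by push_cast; ring]
            exact_mod_cast hhi
        _ = (n : ℝ) := by
            rw [Real.logb_pow, Real.logb_self_eq_one hb, mul_one]
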